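/- Let V : ℝ → ℝ be given by an everywhere-convergent power series, let f : ℝ → ℝ, and let (c_m)_{m≥0} be real constants such that for every nonnegative integer m and every real u, V^{(2m+1)}(u/2) = c_m · f(u). Suppose moreover that for every real v the series G(v) := Σ_{m=0}^∞ c_m · v^{2m+1} / (2^{2m} · (2m+1)!) converges absolutely. Then V is separable with divisors F = f and G, i.e. V((u+v)/2) − V((u−v)/2) = f(u)·G(v) for all real u, v. -/

import Mathlib

open FormalMultilinearSeries in
lemma taylor_entire {V : ℝ → ℝ} {a : ℕ → ℝ}
    (hV : ∀ q : ℝ, HasSum (fun n : ℕ => a n * q ^ n) (V q)) (x y : ℝ) :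
    HasSum (fun n : ℕ => (n.factorial : ℝ)⁻¹ * iteratedDeriv n V x * y ^ n) (V (x + y)) := by
  set p := FormalMultilinearSeries.ofScalars ℝ a with hp
  have hrad : p.radius = ⊤ := by
    apply p.radius_eq_top_of_forall_nnreal_isBigO
    intro r
    have ht : Filter.Tendsto (fun n : ℕ => a n * (r : ℝ) ^ n) Filter.atTop (nhds 0) :=
      (hV r).summable.tendsto_atTop_zero
    have hO : (fun n : ℕ => a n * (r : ℝ) ^ n) =O[Filter.atTop] (fun _ => (1 : ℝ)) :=
      ht.isBigO_one ℝ
    refine (Asymptotics.isBigO_iff.2 ?_)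
    obtain ⟨C, hC⟩ := (Asymptotics.isBigO_iff.1 hO)
    refine ⟨C, hC.mono fun n hn => ?_⟩
    have hnorm : ‖p n‖ = ‖a n‖ := FormalMultilinearSeries.ofScalars_norm ..
    calc ‖‖p n‖ * (r : ℝ) ^ n‖ = ‖a n * (r : ℝ) ^ n‖ := by
          rw [hnorm]; simp [abs_mul, abs_of_nonneg (pow_nonneg r.2 n)]
      _ ≤ C * ‖(1 : ℝ)‖ := hn
  have h0 : HasFPowerSeriesOnBall V p 0 ⊤ := by
    refine ⟨by rw [hrad], by simp, fun {z} _ => ?_⟩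
    have he : (fun n : ℕ => p n fun _ => z) = fun n : ℕ => a n * z ^ n := by
      funext n
      rw [hp, FormalMultilinearSeries.ofScalars_apply_eq, smul_eq_mul]
    rw [zero_add, he]
    exact hV z
  have hx : HasFPowerSeriesOnBall V (p.changeOrigin x) x ⊤ := by
    have h := h0.changeOrigin (y := x) (by simp [hrad])
    simpa [ENNReal.top_sub_coe] using h
  have H := hx.hasSum_iteratedFDeriv (y := y) (EMetric.mem_ball.2 (edist_lt_top _ _))
  convert H using 2 with n
  case e'_3 => rfl
  have hm := (iteratedFDeriv ℝ n V x).map_smul_univ (fun _ : Fin n => y) (fun _ : Fin n => (1 : ℝ))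
  simp only [smul_eq_mul, mul_one, Finset.prod_const, Finset.card_fin] at hm
  rw [iteratedDeriv_eq_iteratedFDeriv, smul_eq_mul, hm]
  ring

theorem stmt5 (V f G : ℝ → ℝ) (a c : ℕ → ℝ)
    (hV : ∀ q : ℝ, HasSum (fun n : ℕ => a n * q ^ n) (V q))
    (hderiv : ∀ (m : ℕ) (u : ℝ), deriv^[2 * m + 1] V (u / 2) = c m * f u)
    (habs : ∀ v : ℝ, Summable (fun m : ℕ =>
      |c m * v ^ (2 * m + 1) / (2 ^ (2 * m) * ((2 * m + 1).factorial : ℝ))|))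
    (hG : ∀ v : ℝ, G v = ∑' m : ℕ,
      c m * v ^ (2 * m + 1) / (2 ^ (2 * m) * ((2 * m + 1).factorial : ℝ))) :
    ∀ u v : ℝ, V ((u + v) / 2) - V ((u - v) / 2) = f u * G v := by
  intro u v
  have h1 := taylor_entire hV (u / 2) (v / 2)
  rw [show u / 2 + v / 2 = (u + v) / 2 by ring] at h1
  have h2 := taylor_entire hV (u / 2) (-(v / 2))
  rw [show u / 2 + -(v / 2) = (u - v) / 2 by ring] at h2
  have h3 := h1.sub h2
  have hinj : Function.Injective (fun m : ℕ => 2 * m + 1) := fun m₁ m₂ h => by simp only at h; omega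
  have hzero : ∀ n ∉ Set.range (fun m : ℕ => 2 * m + 1),
      ((n.factorial : ℝ)⁻¹ * iteratedDeriv n V (u / 2) * (v / 2) ^ n -
        (n.factorial : ℝ)⁻¹ * iteratedDeriv n V (u / 2) * (-(v / 2)) ^ n) = 0 := by
    intro n hn
    have heven : Even n := by
      rcases Nat.even_or_odd n with h | h
      · exact h
      · obtain ⟨k, hk⟩ := h
        exact absurd ⟨k, show 2 * k + 1 = n by omega⟩ hn
    rw [heven.neg_pow]
    ring
  have h4 := (hinj.hasSum_iff hzero).2 h3
  have h5 : HasSum (fun m : ℕ =>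
      f u * (c m * v ^ (2 * m + 1) / (2 ^ (2 * m) * ((2 * m + 1).factorial : ℝ))))
      (V ((u + v) / 2) - V ((u - v) / 2)) := by
    refine h4.congr_fun fun m => ?_
    have hd : iteratedDeriv (2 * m + 1) V (u / 2) = c m * f u := by
      rw [iteratedDeriv_eq_iterate]; exact hderiv m u
    have hodd : Odd (2 * m + 1) := ⟨m, by ring⟩
    simp only [Function.comp_apply, hd, hodd.neg_pow]
    have hfac : ((2 * m + 1).factorial : ℝ) ≠ 0 := Nat.cast_ne_zero.2 (2 * m + 1).factorial_ne_zero
    have hpow : ((v : ℝ) / 2) ^ (2 * m + 1) = v ^ (2 * m + 1) / 2 ^ (2 * m + 1) := div_pow ..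
    rw [hpow, pow_succ]
    field_simp
    ring
  have hs : Summable (fun m : ℕ =>
      c m * v ^ (2 * m + 1) / (2 ^ (2 * m) * ((2 * m + 1).factorial : ℝ))) :=
    (habs v).of_abs
  rw [hG v]
  exact h5.unique (hs.hasSum.mul_left (f u))
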